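/- Let 𝔻 be the unit disc with Poincaré distance k_𝔻, let ξ ∈ ∂𝔻, and let γ(t) = tξ, t ∈ [0,1), be the radius toward ξ. Suppose ζ : [0,+∞) → 𝔻 is a curve with ζ(t) → ξ as t → +∞ and lim_{t→+∞} k_𝔻(ζ(t), γ([0,1))) = 0. Then ζ(t) converges orthogonally to ξ, i.e. arg(1 − conj(ξ)·ζ(t)) → 0 as t → +∞. -/

import Mathlib

open Complex Set Real Filter Topology

/-- The Poincaré (hyperbolic) distance of the unit disc:
`k_𝔻(z,w) = arctanh|(z−w)/(1−conj(w)·z)| = (1/2)·log((1+m)/(1−m))`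
where `m = |(z−w)/(1−conj(w)·z)|`. -/
noncomputable def kD (z w : ℂ) : ℝ :=
  Real.log ((1 + ‖(z - w) / (1 - (starRingEnd ℂ) w * z)‖) /
    (1 - ‖(z - w) / (1 - (starRingEnd ℂ) w * z)‖)) / 2

lemma normSq_lt_one' {a : ℂ} (ha : ‖a‖ < 1) : Complex.normSq a < 1 := by
  rw [← Complex.sq_norm]
  nlinarith [norm_nonneg a]

lemma disc_lt {a b : ℂ} (ha : ‖a‖ < 1) (hb : ‖b‖ < 1) :
    ‖a - b‖ < ‖1 - (starRingEnd ℂ) b * a‖ := by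
  have ha' := normSq_lt_one' ha
  have hb' := normSq_lt_one' hb
  rw [Complex.norm_def, Complex.norm_def]
  apply Real.sqrt_lt_sqrt (Complex.normSq_nonneg _)
  simp only [Complex.normSq_apply, Complex.sub_re, Complex.sub_im, Complex.mul_re,
    Complex.mul_im, Complex.one_re, Complex.one_im, Complex.conj_re, Complex.conj_im] at *
  nlinarith [mul_pos (sub_pos.2 ha') (sub_pos.2 hb')]

lemma kD_nonneg {z w : ℂ} (hz : ‖z‖ < 1) (hw : ‖w‖ < 1) : 0 ≤ kD z w := by
  have h := disc_lt hz hw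
  have hden : 0 < ‖1 - (starRingEnd ℂ) w * z‖ :=
    lt_of_le_of_lt (norm_nonneg _) h
  set m := ‖(z - w) / (1 - (starRingEnd ℂ) w * z)‖ with hm
  have hm0 : 0 ≤ m := norm_nonneg _
  have hm1 : m < 1 := by
    rw [hm, norm_div]
    exact (div_lt_one hden).2 h
  unfold kD
  rw [← hm]
  apply div_nonneg _ (by norm_num)
  apply Real.log_nonneg
  rw [le_div_iff₀ (by linarith)]
  linarith

/-- If a curve `ζ(t)` in `𝔻` tends to `ξ ∈ ∂𝔻` and its hyperbolic distance to
the radius `γ(t) = tξ` tends to `0`, then `ζ(t)` converges orthogonally to `ξ`. -/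
theorem stmt_18 (ξ : ℂ) (hξ : ‖ξ‖ = 1) (ζ : ℝ → ℂ)
    (hζ : ∀ t : ℝ, ‖ζ t‖ < 1)
    (hlim : Filter.Tendsto ζ Filter.atTop (nhds ξ))
    (hdist : Filter.Tendsto
      (fun t => sInf ((fun r : ℝ => kD (ζ t) ((r : ℂ) * ξ)) '' Set.Ico 0 1))
      Filter.atTop (nhds 0)) :
    Filter.Tendsto (fun t => Complex.arg (1 - (starRingEnd ℂ) ξ * ζ t))
      Filter.atTop (nhds 0) := by
  rw [Metric.tendsto_nhds]
  intro ε hε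
  have hcont : ContinuousAt Complex.arg 1 :=
    Complex.continuousAt_arg Complex.one_mem_slitPlane
  obtain ⟨η, hη, hηε⟩ := Metric.continuousAt_iff.1 hcont ε hε
  set δ : ℝ := min (1/2) (η/5) with hδdef
  have hδ0 : 0 < δ := lt_min (by norm_num) (by linarith)
  have hδhalf : δ ≤ 1/2 := min_le_left _ _
  have hδη : 4*δ < η := by
    have : δ ≤ η/5 := min_le_right _ _
    linarith
  set c : ℝ := Real.log ((1+δ)/(1-δ)) / 2 with hcdef
  have hc : 0 < c := by
    apply div_pos _ (by norm_num)
    apply Real.log_pos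
    rw [lt_div_iff₀ (by linarith)]
    linarith
  have hev : ∀ᶠ t in atTop,
      sInf ((fun r : ℝ => kD (ζ t) ((r : ℂ) * ξ)) '' Set.Ico 0 1) < c :=
    hdist.eventually (gt_mem_nhds hc)
  filter_upwards [hev] with t ht
  -- extract a good r
  have hξr : ∀ r : ℝ, r ∈ Ico (0:ℝ) 1 → ‖(r:ℂ) * ξ‖ < 1 := by
    intro r hr
    rw [norm_mul, Complex.norm_real, Real.norm_eq_abs, hξ, mul_one, _root_.abs_of_nonneg hr.1]
    exact hr.2
  have hbdd : BddBelow ((fun r : ℝ => kD (ζ t) ((r : ℂ) * ξ)) '' Set.Ico 0 1) := by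
    refine ⟨0, ?_⟩
    rintro x ⟨r, hr, rfl⟩
    exact kD_nonneg (hζ t) (hξr r hr)
  have hne : ((fun r : ℝ => kD (ζ t) ((r : ℂ) * ξ)) '' Set.Ico 0 1).Nonempty :=
    ⟨_, ⟨0, by constructor <;> norm_num, rfl⟩⟩
  obtain ⟨x, ⟨r, hrI, rfl⟩, hx⟩ := (csInf_lt_iff hbdd hne).mp ht
  obtain ⟨hr0, hr1⟩ := hrI
  -- set up w and q
  set w : ℂ := (starRingEnd ℂ) ξ * ζ t with hwdef
  have hwabs : ‖w‖ < 1 := by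
    rw [hwdef, norm_mul, Complex.norm_conj, hξ, one_mul]
    exact hζ t
  have hrw : ‖(r:ℂ) * w‖ < 1 := by
    rw [norm_mul, Complex.norm_real, Real.norm_eq_abs, _root_.abs_of_nonneg hr0]
    nlinarith [norm_nonneg w]
  have hden : (1 : ℂ) - (r:ℂ)*w ≠ 0 := by
    intro h
    have : (1:ℂ) = (r:ℂ)*w := by linear_combination h
    rw [← this] at hrw
    simp at hrw
  set q : ℂ := (w - (r:ℂ))/(1 - (r:ℂ)*w) with hqdef
  have hξ1 : ξ * (starRingEnd ℂ) ξ = 1 := by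
    rw [Complex.mul_conj, Complex.normSq_eq_norm_sq, hξ]
    norm_num
  have hzw : ξ * w = ζ t := by
    rw [hwdef, ← mul_assoc, hξ1, one_mul]
  have hEq : (ζ t - (r:ℂ)*ξ) / (1 - (starRingEnd ℂ) ((r:ℂ)*ξ) * ζ t) = ξ * q := by
    rw [hqdef, map_mul, Complex.conj_ofReal, mul_div_assoc']
    congr 1
    · rw [mul_sub, hzw]; ring
    · rw [hwdef]; ring
  have habs : ‖(ζ t - (r:ℂ)*ξ) / (1 - (starRingEnd ℂ) ((r:ℂ)*ξ) * ζ t)‖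
      = ‖q‖ := by
    rw [hEq, norm_mul, hξ, one_mul]
  have hq1 : ‖q‖ < 1 := by
    have h := disc_lt (hζ t) (hξr r ⟨hr0, hr1⟩)
    have hdpos : 0 < ‖1 - (starRingEnd ℂ) ((r:ℂ)*ξ) * ζ t‖ :=
      lt_of_le_of_lt (norm_nonneg _) h
    rw [← habs, norm_div]
    exact (div_lt_one hdpos).2 h
  have hqδ : ‖q‖ < δ := by
    have hx' : kD (ζ t) ((r:ℂ)*ξ) < c := hx
    unfold kD at hx'
    rw [habs] at hx'
    set m := ‖q‖ with hm
    have hm0 : 0 ≤ m := norm_nonneg _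
    rw [hcdef, div_lt_div_iff_of_pos_right (by norm_num)] at hx'
    have hlt : (1+m)/(1-m) < (1+δ)/(1-δ) :=
      (Real.log_lt_log_iff (div_pos (by linarith) (by linarith)) (div_pos (by linarith) (by linarith))).1 hx'
    rw [div_lt_div_iff₀ (by linarith) (by linarith)] at hlt
    nlinarith
  -- key identity
  have hq_mul : q * (1 - (r:ℂ)*w) = w - (r:ℂ) := by
    rw [hqdef, div_mul_cancel₀ _ hden]
  have hrq : ‖(r:ℂ)*q‖ ≤ ‖q‖ := by
    rw [norm_mul, Complex.norm_real, Real.norm_eq_abs, _root_.abs_of_nonneg hr0]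
    nlinarith [norm_nonneg q]
  have hden3 : (1 : ℂ) + (r:ℂ)*q ≠ 0 := by
    intro h
    have h1 : (r:ℂ)*q = -1 := by linear_combination h
    have := hrq
    rw [h1] at this
    simp at this
    linarith
  have habs_den : (1:ℝ)/2 ≤ ‖1 + (r:ℂ)*q‖ := by
    have htri := norm_add_le (1 + (r:ℂ)*q) (-((r:ℂ)*q))
    simp only [add_neg_cancel_right, norm_one, norm_neg] at htri
    have : ‖1 + (r:ℂ)*q + -((r:ℂ)*q)‖ = 1 := by
      norm_num
    linarith [hrq, hqδ]
  set Q : ℂ := (1 - q)/(1 + (r:ℂ)*q) with hQdef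
  have hQ : (1:ℂ) - w = ((1:ℝ) - r : ℝ) * Q := by
    rw [hQdef]
    push_cast
    rw [mul_div_assoc', eq_div_iff hden3]
    linear_combination hq_mul
  have hQ1 : dist Q 1 < η := by
    have hQm : Q - 1 = (-((1:ℂ)+(r:ℂ))*q)/(1 + (r:ℂ)*q) := by
      rw [hQdef, div_sub_one hden3]
      congr 1
      ring
    rw [Complex.dist_eq, hQm, norm_div, norm_mul, norm_neg]
    have hnum : ‖(1:ℂ)+(r:ℂ)‖ = 1 + r := by
      rw [show ((1:ℂ)+(r:ℂ)) = ((1+r : ℝ) : ℂ) by push_cast; ring,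
        Complex.norm_real, Real.norm_eq_abs, _root_.abs_of_nonneg (by linarith)]
    rw [hnum]
    have hdpos : (0:ℝ) < ‖1 + (r:ℂ)*q‖ := by linarith
    rw [div_lt_iff₀ hdpos]
    nlinarith [norm_nonneg q, hqδ, habs_den, hrw]
  have harg : Complex.arg (1 - w) = Complex.arg Q := by
    rw [hQ]
    exact Complex.arg_real_mul Q (by linarith)
  have h2 := hηε hQ1
  rw [Complex.arg_one, Real.dist_eq, sub_zero] at h2
  rw [Real.dist_eq, sub_zero, harg]
  exact h2
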